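/- Let p, l be primes with p ∣ (l−1) and let α ∈ Z_l^* be a unit which is not a p-th power. Then the diagonal form x_1^p + l·x_2^p + ... + l^{p−1}·x_p^p in p variables over Q_l represents α only trivially; equivalently, α is not represented by the form over Q_l. -/

import Mathlib

open Finset Polynomial

/-- Ultrametric strict bound for finite sums in `ℚ_[p]`. -/
lemma padic_sum_norm_lt {p : ℕ} [Fact p.Prime] {ι : Type*} (s : Finset ι)
    (f : ι → ℚ_[p]) {c : ℝ} (hc : 0 < c) (h : ∀ i ∈ s, ‖f i‖ < c) :
    ‖∑ i ∈ s, f i‖ < c := by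
  classical
  induction s using Finset.induction_on with
  | empty => simpa using hc
  | @insert a s ha ih =>
    rw [Finset.sum_insert ha]
    calc ‖f a + ∑ i ∈ s, f i‖ ≤ max ‖f a‖ ‖∑ i ∈ s, f i‖ := Padic.nonarchimedean _ _
      _ < c := max_lt (h a (Finset.mem_insert_self a s))
        (ih fun i hi => h i (Finset.mem_insert_of_mem hi))

/-- Let `p, l` be primes with `p ∣ l - 1` and `α ∈ ℤ_[l]ˣ` a unit which is
not a `p`-th power in `ℤ_[l]`. Then the diagonal form
`x 0 ^ p + l * x 1 ^ p + ⋯ + l ^ (p-1) * x (p-1) ^ p` in `p` variables does not represent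
`α` over `ℚ_[l]`. -/
theorem stmt_12 (p l : ℕ) [Fact p.Prime] [Fact l.Prime] (hdvd : p ∣ l - 1)
    (α : ℤ_[l]ˣ) (hα : ¬ ∃ v : ℤ_[l], v ^ p = (α : ℤ_[l])) :
    ¬ ∃ x : Fin p → ℚ_[l],
        ∑ i : Fin p, (l : ℚ_[l]) ^ (i : ℕ) * x i ^ p = ((α : ℤ_[l]) : ℚ_[l]) := by
  classical
  rintro ⟨x, hx⟩
  have hpp : p.Prime := Fact.out
  have hlp : l.Prime := Fact.out
  have hp0 : 0 < p := hpp.pos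
  have hl1 : 1 < l := hlp.one_lt
  have hpl : p < l := by
    have h1 : p ≤ l - 1 := Nat.le_of_dvd (by omega) hdvd
    omega
  have hlR1 : (1 : ℝ) < (l : ℝ) := by exact_mod_cast hl1
  have hlR0 : (0 : ℝ) < (l : ℝ) := by positivity
  have hlRne1 : (l : ℝ) ≠ 1 := ne_of_gt hlR1
  have hlQ0 : ((l : ℚ_[l])) ≠ 0 := by
    exact_mod_cast (Nat.cast_ne_zero (R := ℚ_[l])).mpr (by omega)
  set t : Fin p → ℚ_[l] := fun i => (l : ℚ_[l]) ^ (i : ℕ) * x i ^ p with ht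
  -- norm formula for nonzero terms
  have htz : ∀ i : Fin p, x i = 0 → t i = 0 := by
    intro i hi
    simp [ht, hi, hp0.ne']
  have hnorm : ∀ i : Fin p, x i ≠ 0 →
      ‖t i‖ = (l : ℝ) ^ (-((i : ℤ) + (p : ℤ) * (x i).valuation)) := by
    intro i hi
    rw [ht]
    simp only
    rw [norm_mul, Padic.norm_p_pow, norm_pow, Padic.norm_eq_zpow_neg_valuation hi,
      ← zpow_natCast ((l : ℝ) ^ (-(x i).valuation)), ← zpow_mul, ← zpow_add₀ (ne_of_gt hlR0)]
    ring_nf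
  -- norms of distinct nonzero terms are distinct
  have hinj : ∀ i j : Fin p, x i ≠ 0 → x j ≠ 0 → ‖t i‖ = ‖t j‖ → i = j := by
    intro i j hi hj hij
    rw [hnorm i hi, hnorm j hj, zpow_right_inj₀ hlR0 hlRne1, neg_inj] at hij
    -- cast to ZMod p
    have hz : ((i : ℕ) : ZMod p) = ((j : ℕ) : ZMod p) := by
      have := congrArg (fun n : ℤ => (n : ZMod p)) hij
      push_cast at this
      simpa [ZMod.natCast_self] using this
    have : (i : ℕ) = (j : ℕ) := by
      have hi' := ZMod.val_cast_of_lt i.isLt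
      have hj' := ZMod.val_cast_of_lt j.isLt
      rw [← hi', ← hj', hz]
    exact Fin.ext this
  -- the sum has norm 1
  have hαQ : ‖((α : ℤ_[l]) : ℚ_[l])‖ = 1 := by
    rw [← PadicInt.norm_def]; exact PadicInt.norm_units α
  -- pick the index of maximal norm among nonzero terms
  set s : Finset (Fin p) := Finset.univ.filter (fun i => x i ≠ 0) with hs
  have hsne : s.Nonempty := by
    by_contra hemp
    rw [Finset.not_nonempty_iff_eq_empty] at hemp
    have : ∀ i : Fin p, x i = 0 := by
      intro i
      by_contra hxi
      have : i ∈ s := by simp [hs, hxi]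
      simp [hemp] at this
    have hsum : ∑ i : Fin p, t i = 0 := by
      apply Finset.sum_eq_zero
      intro i _
      exact htz i (this i)
    rw [ht] at hsum
    rw [hsum] at hx
    rw [← hx] at hαQ
    simp at hαQ
  obtain ⟨i₀, hi₀s, hmax⟩ := Finset.exists_max_image s (fun i => ‖t i‖) hsne
  have hxi₀ : x i₀ ≠ 0 := by simpa [hs] using hi₀s
  have hti₀ : t i₀ ≠ 0 := by
    simp only [ht]
    exact mul_ne_zero (pow_ne_zero _ hlQ0) (pow_ne_zero _ hxi₀)
  have hti₀pos : 0 < ‖t i₀‖ := norm_pos_iff.mpr hti₀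
  -- the rest of the sum has strictly smaller norm
  have hrest : ‖∑ i ∈ Finset.univ.erase i₀, t i‖ < ‖t i₀‖ := by
    apply padic_sum_norm_lt _ _ hti₀pos
    intro j hj
    have hjne : j ≠ i₀ := Finset.ne_of_mem_erase hj
    by_cases hxj : x j = 0
    · rw [htz j hxj]; simpa using hti₀pos
    · have hjs : j ∈ s := by simp [hs, hxj]
      have hle : ‖t j‖ ≤ ‖t i₀‖ := hmax j hjs
      rcases lt_or_eq_of_le hle with hlt | heq
      · exact hlt
      · exact absurd (hinj j i₀ hxj hxi₀ heq) hjne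
  -- the total sum has norm ‖t i₀‖
  have hsum_eq : (∑ i : Fin p, t i) = t i₀ + ∑ i ∈ Finset.univ.erase i₀, t i := by
    rw [Finset.add_sum_erase _ _ (Finset.mem_univ i₀)]
  have hnorm_sum : ‖∑ i : Fin p, t i‖ = ‖t i₀‖ := by
    rw [hsum_eq, Padic.add_eq_max_of_ne (ne_of_lt hrest).symm]
    exact max_eq_left (le_of_lt hrest)
  have hone : ‖t i₀‖ = 1 := by
    rw [← hnorm_sum, ht]
    rw [show (∑ i : Fin p, (l : ℚ_[l]) ^ (i : ℕ) * x i ^ p) = ((α : ℤ_[l]) : ℚ_[l]) from hx]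
    exact hαQ
  -- deduce i₀ = 0 and valuation (x i₀) = 0
  have hexp : (i₀ : ℤ) + (p : ℤ) * (x i₀).valuation = 0 := by
    have := hnorm i₀ hxi₀
    rw [hone] at this
    have h0 : (l : ℝ) ^ (0 : ℤ) = (l : ℝ) ^ (-((i₀ : ℤ) + (p : ℤ) * (x i₀).valuation)) := by
      rw [zpow_zero]; exact this
    have := (zpow_right_inj₀ hlR0 hlRne1).mp h0
    linarith
  have hpdvd : (p : ℤ) ∣ (i₀ : ℤ) := ⟨-(x i₀).valuation, by linear_combination hexp⟩
  have hi₀0 : (i₀ : ℕ) = 0 := by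
    have : p ∣ (i₀ : ℕ) := by exact_mod_cast hpdvd
    exact Nat.eq_zero_of_dvd_of_lt this i₀.isLt
  have hval0 : (x i₀).valuation = 0 := by
    rw [hi₀0] at hexp
    simp only [Nat.cast_zero, zero_add] at hexp
    have hpz : (p : ℤ) ≠ 0 := by exact_mod_cast hp0.ne'
    exact (mul_eq_zero.mp hexp).elim (fun h => absurd h hpz) id
  have hxn1 : ‖x i₀‖ = 1 := by
    rw [Padic.norm_eq_zpow_neg_valuation hxi₀, hval0]
    simp
  -- the element y := x i₀ lies in ℤ_[l]
  set y : ℤ_[l] := ⟨x i₀, le_of_eq hxn1⟩ with hy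
  have hyn : ‖y‖ = 1 := hxn1
  -- ‖α - y^p‖ < 1
  have hti₀eq : t i₀ = x i₀ ^ p := by
    rw [ht]; simp [hi₀0]
  have hdiff : ‖((α : ℤ_[l]) : ℚ_[l]) - x i₀ ^ p‖ < 1 := by
    have : ((α : ℤ_[l]) : ℚ_[l]) - x i₀ ^ p = ∑ i ∈ Finset.univ.erase i₀, t i := by
      rw [← hx, hsum_eq, hti₀eq]; ring
    rw [this]
    calc ‖∑ i ∈ Finset.univ.erase i₀, t i‖ < ‖t i₀‖ := hrest
      _ = 1 := hone
  -- apply Hensel's lemma to F = X^p - α at y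
  set F : Polynomial ℤ_[l] := X ^ p - C (α : ℤ_[l]) with hF
  have hFeval : F.eval y = y ^ p - (α : ℤ_[l]) := by
    simp [hF]
  have hFevalnorm : ‖F.eval y‖ < 1 := by
    rw [hFeval, PadicInt.norm_def]
    have : ((y ^ p - (α : ℤ_[l]) : ℤ_[l]) : ℚ_[l]) = x i₀ ^ p - ((α : ℤ_[l]) : ℚ_[l]) := by
      push_cast [hy]
      rfl
    rw [this, norm_sub_rev]
    exact hdiff
  have hlndvdp : ¬ (l : ℤ) ∣ (p : ℤ) := by
    intro h
    have := Int.le_of_dvd (by exact_mod_cast hp0) h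
    omega
  have hpnorm : ‖((p : ℤ) : ℤ_[l])‖ = 1 := by
    have h1 : ¬ ‖((p : ℤ) : ℤ_[l])‖ < 1 := fun h =>
      hlndvdp ((PadicInt.norm_int_lt_one_iff_dvd p).mp h)
    have h2 : ‖((p : ℤ) : ℤ_[l])‖ ≤ 1 := PadicInt.norm_le_one _
    linarith [lt_or_eq_of_le h2|>.resolve_left h1]
  have hFderiv : ‖F.derivative.eval y‖ = 1 := by
    have : F.derivative = C ((p : ℕ) : ℤ_[l]) * X ^ (p - 1) := by
      rw [hF]
      simp [Polynomial.derivative_X_pow]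
    rw [this]
    simp only [Polynomial.eval_mul, Polynomial.eval_C, Polynomial.eval_pow, Polynomial.eval_X]
    rw [norm_mul]
    have hy1 : ‖y ^ (p - 1)‖ = 1 := by
      rw [PadicInt.norm_def]
      push_cast
      rw [norm_pow]
      rw [hxn1, one_pow]
    have hc : ((p : ℕ) : ℤ_[l]) = ((p : ℤ) : ℤ_[l]) := by push_cast; ring
    rw [hy1, hc, hpnorm, mul_one]
  have hhyp : ‖F.eval y‖ < ‖F.derivative.eval y‖ ^ 2 := by
    rw [hFderiv]; simpa using hFevalnorm
  obtain ⟨z, hz, -⟩ := hensels_lemma hhyp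
  apply hα
  refine ⟨z, ?_⟩
  have hz' : z ^ p - (α : ℤ_[l]) = 0 := by
    simpa [hF] using hz
  exact sub_eq_zero.mp hz'
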